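/- Fix 1 ≤ k ≤ r. There exists n₀ such that for all n ≥ n₀ the following holds: if ℬ ⊆ [n]^(r−k+1) is an intersecting family with ℬ⟨1⟩ = [α^(r−k+1)] (the first α^(r−k+1) points of [n]), and 𝒜 = {A ∈ [n]^(r) : there exists B ∈ ℬ with B ⊆ A}, then 𝒜 is intersecting and 𝒜⟨k⟩ = {C ∈ [n]^(k) : C ∩ [α^(r−k+1)] ≠ ∅}. -/

import Mathlib

open Finset

/-- The ground set `[n] = {1, …, n}`. -/
def grd (n : ℕ) : Finset ℕ := Finset.Icc 1 n

/-- `[n]^(k)`: all `k`-element subsets of `[n]`. -/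
def ksets (n k : ℕ) : Finset (Finset ℕ) := (grd n).powersetCard k

/-- A family of sets is intersecting if any two of its members meet. -/
def IsIntersecting (𝒜 : Finset (Finset ℕ)) : Prop :=
  ∀ A ∈ 𝒜, ∀ B ∈ 𝒜, (A ∩ B).Nonempty

/-- `𝒜⟨k⟩`: the collection of `k`-sets arising as pairwise intersections of members of `𝒜`. -/
def interk (𝒜 : Finset (Finset ℕ)) (k : ℕ) : Finset (Finset ℕ) :=
  ((𝒜 ×ˢ 𝒜).image fun p => p.1 ∩ p.2).filter fun C => C.card = k

/-- `𝒜⟨1⟩` identified with a set of points: all `x` with `{x} = A ∩ B` for some `A, B ∈ 𝒜`. -/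
def interPts (𝒜 : Finset (Finset ℕ)) : Finset ℕ :=
  (interk 𝒜 1).sup id

/-- `β(n,r,k)`: the maximum of `|𝒜⟨k⟩|` over intersecting families `𝒜 ⊆ [n]^(r)`. -/
noncomputable def beta (n r k : ℕ) : ℕ :=
  sSup {m | ∃ 𝒜 ⊆ ksets n r, IsIntersecting 𝒜 ∧ (interk 𝒜 k).card = m}

/-- `α^(r) = max {β(n,r,1) : n ≥ r}` (finite by Lovász's theorem). -/
noncomputable def alpha (r : ℕ) : ℕ :=
  sSup {m | ∃ n, r ≤ n ∧ beta n r 1 = m}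

section Helpers

lemma mem_interk {𝒜 : Finset (Finset ℕ)} {k : ℕ} {C : Finset ℕ} :
    C ∈ interk 𝒜 k ↔ (∃ A ∈ 𝒜, ∃ B ∈ 𝒜, A ∩ B = C) ∧ C.card = k := by
  simp only [interk, Finset.mem_filter, Finset.mem_image, Finset.mem_product, Prod.exists]
  tauto

lemma mem_interPts {𝒜 : Finset (Finset ℕ)} {x : ℕ} :
    x ∈ interPts 𝒜 ↔ ∃ A ∈ 𝒜, ∃ B ∈ 𝒜, A ∩ B = {x} := by
  simp only [interPts, Finset.mem_sup, id_eq]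
  constructor
  · rintro ⟨C, hC, hxC⟩
    obtain ⟨⟨A, hA, B, hB, hAB⟩, hcard⟩ := mem_interk.1 hC
    obtain ⟨y, hy⟩ := Finset.card_eq_one.1 hcard
    subst hy
    rw [Finset.mem_singleton] at hxC
    subst hxC
    exact ⟨A, hA, B, hB, hAB⟩
  · rintro ⟨A, hA, B, hB, hAB⟩
    exact ⟨{x}, mem_interk.2 ⟨⟨A, hA, B, hB, hAB⟩, by simp⟩, by simp⟩

lemma interk_mono {𝒜 ℬ : Finset (Finset ℕ)} (h : 𝒜 ⊆ ℬ) (k : ℕ) :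
    interk 𝒜 k ⊆ interk ℬ k := by
  intro C hC
  obtain ⟨⟨A, hA, B, hB, hAB⟩, hcard⟩ := mem_interk.1 hC
  exact mem_interk.2 ⟨⟨A, h hA, B, h hB, hAB⟩, hcard⟩

lemma interPts_mono {𝒜 ℬ : Finset (Finset ℕ)} (h : 𝒜 ⊆ ℬ) :
    interPts 𝒜 ⊆ interPts ℬ := by
  intro x hx
  rw [mem_interPts] at hx ⊢
  obtain ⟨A, hA, B, hB, hAB⟩ := hx
  exact ⟨A, h hA, B, h hB, hAB⟩

lemma card_interPts_le (𝒜 : Finset (Finset ℕ)) :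
    (interPts 𝒜).card ≤ (interk 𝒜 1).card := by
  rw [interPts, Finset.sup_eq_biUnion]
  calc ((interk 𝒜 1).biUnion id).card ≤ ∑ C ∈ interk 𝒜 1, (id C).card :=
        Finset.card_biUnion_le
    _ ≤ ∑ _C ∈ interk 𝒜 1, 1 := by
        refine Finset.sum_le_sum fun C hC => ?_
        exact le_of_eq (mem_interk.1 hC).2
    _ = (interk 𝒜 1).card := by simp

end Helpers
section Sunflower

/-- Erdős–Rado sunflower lemma (weak form sufficient for Lovász's theorem). -/
lemma sunflower_lemma (p : ℕ) :
    ∀ (r : ℕ) (F : Finset (Finset ℕ)), (∀ A ∈ F, A.card = r) →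
      Nat.factorial r * (p - 1) ^ r < F.card →
      ∃ S ⊆ F, S.card = p ∧ ∃ E : Finset ℕ,
        ∀ X ∈ S, ∀ Y ∈ S, X ≠ Y → X ∩ Y = E := by
  intro r
  induction r with
  | zero =>
    intro F hcard hbig
    exfalso
    simp only [Nat.factorial_zero, pow_zero, mul_one] at hbig
    have : F ⊆ {∅} := by
      intro A hA
      simp [Finset.card_eq_zero.1 (hcard A hA)]
    have := Finset.card_le_card this
    simp at this
    omega
  | succ r ih =>
    intro F hcard hbig
    -- take a pairwise disjoint subfamily of maximum size
    classical
    have hPDne : (F.powerset.filter fun M : Finset (Finset ℕ) => ((M : Set (Finset ℕ)).PairwiseDisjoint id)).Nonempty := by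
      refine ⟨∅, ?_⟩
      rw [Finset.mem_filter, Finset.mem_powerset]
      exact ⟨Finset.empty_subset _, by simp⟩
    obtain ⟨M, hMsub, hMmax⟩ := Finset.exists_max_image
      (F.powerset.filter fun M : Finset (Finset ℕ) => ((M : Set (Finset ℕ)).PairwiseDisjoint id))
      (fun M => M.card) hPDne
    rw [Finset.mem_filter, Finset.mem_powerset] at hMsub
    obtain ⟨hMF, hMdisj⟩ := hMsub
    by_cases hM : p ≤ M.card
    · obtain ⟨S, hSM, hScard⟩ := Finset.exists_subset_card_eq hM
      refine ⟨S, hSM.trans hMF, hScard, ∅, fun X hX Y hY hne => ?_⟩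
      have := hMdisj (hSM hX) (hSM hY) hne
      simpa [Finset.disjoint_iff_inter_eq_empty] using this.eq_bot
    · push_neg at hM
      set U := M.sup id with hU
      have hUcard : U.card ≤ (r + 1) * (p - 1) := by
        calc U.card ≤ ∑ A ∈ M, (id A).card := by
              rw [hU, Finset.sup_eq_biUnion]; exact Finset.card_biUnion_le
          _ = ∑ A ∈ M, (r + 1) := by
              refine Finset.sum_congr rfl fun A hA => ?_
              simp [hcard A (hMF hA)]
          _ = M.card * (r + 1) := by simp [mul_comm]
          _ ≤ (p - 1) * (r + 1) := by
              have : M.card ≤ p - 1 := by omega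
              exact Nat.mul_le_mul_right _ this
          _ = (r + 1) * (p - 1) := mul_comm _ _
      -- every member of F meets U
      have hmeet : ∀ A ∈ F, ∃ y ∈ U, y ∈ A := by
        intro A hA
        by_contra hnone
        push_neg at hnone
        have hAdisjU : ∀ B ∈ M, Disjoint A B := by
          intro B hB
          refine Finset.disjoint_left.2 fun y hyA hyB => hnone y ?_ hyA
          rw [hU, Finset.mem_sup]
          exact ⟨B, hB, hyB⟩
        have hAnotM : A ∉ M := by
          intro hAM
          have hApos : 0 < A.card := by rw [hcard A hA]; omega
          obtain ⟨y, hy⟩ := Finset.card_pos.1 hApos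
          exact hnone y (Finset.mem_sup.2 ⟨A, hAM, hy⟩) hy
        have hins : insert A M ∈ F.powerset.filter
            fun M : Finset (Finset ℕ) => ((M : Set (Finset ℕ)).PairwiseDisjoint id) := by
          rw [Finset.mem_filter, Finset.mem_powerset]
          refine ⟨Finset.insert_subset hA hMF, ?_⟩
          rw [Finset.coe_insert]
          refine Set.PairwiseDisjoint.insert hMdisj fun B hB _ => ?_
          simpa using hAdisjU B hB
        have := hMmax _ hins
        rw [Finset.card_insert_of_notMem hAnotM] at this
        omega
      -- pigeonhole: some y in many members
      have hcover : F ⊆ U.biUnion fun y => F.filter fun A => y ∈ A := by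
        intro A hA
        obtain ⟨y, hyU, hyA⟩ := hmeet A hA
        exact Finset.mem_biUnion.2 ⟨y, hyU, Finset.mem_filter.2 ⟨hA, hyA⟩⟩
      have hex : ∃ y ∈ U, Nat.factorial r * (p - 1) ^ r <
          (F.filter fun A => y ∈ A).card := by
        by_contra hall
        push_neg at hall
        have : F.card ≤ ∑ y ∈ U, (F.filter fun A => y ∈ A).card :=
          le_trans (Finset.card_le_card hcover) Finset.card_biUnion_le
        have h2 : ∑ y ∈ U, (F.filter fun A => y ∈ A).card ≤
            U.card * (Nat.factorial r * (p - 1) ^ r) := by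
          calc ∑ y ∈ U, (F.filter fun A => y ∈ A).card
              ≤ ∑ _y ∈ U, Nat.factorial r * (p - 1) ^ r :=
                Finset.sum_le_sum hall
            _ = U.card * (Nat.factorial r * (p - 1) ^ r) := by
                simp [mul_comm]
        have h3 : U.card * (Nat.factorial r * (p - 1) ^ r) ≤
            ((r + 1) * (p - 1)) * (Nat.factorial r * (p - 1) ^ r) :=
          Nat.mul_le_mul_right _ hUcard
        have h4 : ((r + 1) * (p - 1)) * (Nat.factorial r * (p - 1) ^ r) =
            Nat.factorial (r + 1) * (p - 1) ^ (r + 1) := by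
          rw [Nat.factorial_succ, pow_succ]
          ring
        omega
      obtain ⟨y, _hyU, hy⟩ := hex
      set Fy := F.filter fun A => y ∈ A with hFy
      have herase_inj : Set.InjOn (fun A : Finset ℕ => A.erase y) Fy := by
        intro A hA B hB hAB
        simp only [Finset.coe_filter, Set.mem_setOf_eq, hFy] at hA hB
        have hAB' : A.erase y = B.erase y := hAB
        have : insert y (A.erase y) = insert y (B.erase y) := by rw [hAB']
        rwa [Finset.insert_erase hA.2, Finset.insert_erase hB.2] at this
      set G := Fy.image fun A => A.erase y with hG
      have hGcard : G.card = Fy.card := Finset.card_image_of_injOn herase_inj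
      have hGsets : ∀ a ∈ G, a.card = r := by
        intro a ha
        obtain ⟨A, hA, rfl⟩ := Finset.mem_image.1 ha
        rw [Finset.mem_filter] at hA
        rw [Finset.card_erase_of_mem hA.2, hcard A hA.1]
        omega
      obtain ⟨S', hS'G, hS'card, E, hE⟩ := ih G hGsets (by omega)
      refine ⟨S'.image (insert y), ?_, ?_, insert y E, ?_⟩
      · intro X hX
        obtain ⟨a, ha, rfl⟩ := Finset.mem_image.1 hX
        obtain ⟨A, hA, rfl⟩ := Finset.mem_image.1 (hS'G ha)
        rw [Finset.mem_filter] at hA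
        rw [Finset.insert_erase hA.2]
        exact hA.1
      · rw [Finset.card_image_of_injOn, hS'card]
        intro a ha b hb hab
        have hya : y ∉ a := by
          obtain ⟨A, _, rfl⟩ := Finset.mem_image.1 (hS'G ha)
          exact Finset.notMem_erase y A
        have hyb : y ∉ b := by
          obtain ⟨A, _, rfl⟩ := Finset.mem_image.1 (hS'G hb)
          exact Finset.notMem_erase y A
        ext z
        constructor
        · intro hz
          have : z ∈ insert y b := hab ▸ Finset.mem_insert_of_mem hz
          rcases Finset.mem_insert.1 this with rfl | h
          · exact absurd hz hya
          · exact h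
        · intro hz
          have : z ∈ insert y a := hab ▸ Finset.mem_insert_of_mem hz
          rcases Finset.mem_insert.1 this with rfl | h
          · exact absurd hz hyb
          · exact h
      · intro X hX Y hY hne
        obtain ⟨a, ha, rfl⟩ := Finset.mem_image.1 hX
        obtain ⟨b, hb, rfl⟩ := Finset.mem_image.1 hY
        have hab : a ≠ b := fun h => hne (by rw [h])
        have : insert y a ∩ insert y b = insert y (a ∩ b) := by
          ext z; simp only [Finset.mem_inter, Finset.mem_insert]; tauto
        rw [this, hE a ha b hb hab]

end Sunflower
section Lovasz

/-- Lovász's theorem: an intersecting family of `m`-sets has a bounded number of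
singleton intersections. -/
lemma lovasz_bound (m : ℕ) (ℬ : Finset (Finset ℕ)) (hcard : ∀ B ∈ ℬ, B.card = m)
    (hint : IsIntersecting ℬ) :
    (interk ℬ 1).card ≤ m * (Nat.factorial m * (m + 1) ^ m) := by
  classical
  by_contra hbig
  push_neg at hbig
  -- choose witnesses for each singleton intersection
  have h1 : ∀ C : Finset ℕ, ∃ A B : Finset ℕ, C ∈ interk ℬ 1 →
      A ∈ ℬ ∧ B ∈ ℬ ∧ A ∩ B = C := by
    intro C
    by_cases hC : C ∈ interk ℬ 1
    · obtain ⟨⟨A, hA, B, hB, hAB⟩, _⟩ := mem_interk.1 hC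
      exact ⟨A, B, fun _ => ⟨hA, hB, hAB⟩⟩
    · exact ⟨∅, ∅, fun h => absurd h hC⟩
  choose f fB hf using h1
  set W := (interk ℬ 1).image f with hW
  have hWB : ∀ X ∈ W, X ∈ ℬ := by
    intro X hX
    obtain ⟨C, hC, rfl⟩ := Finset.mem_image.1 hX
    exact (hf C hC).1
  -- fibers of f have size at most m
  have hfiber : ∀ X ∈ W, ((interk ℬ 1).filter fun C => f C = X).card ≤ m := by
    intro X hX
    have hsub : ((interk ℬ 1).filter fun C => f C = X) ⊆ X.powersetCard 1 := by
      intro C hC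
      rw [Finset.mem_filter] at hC
      obtain ⟨hC1, hC2⟩ := hC
      refine Finset.mem_powersetCard.2 ⟨?_, (mem_interk.1 hC1).2⟩
      have := (hf C hC1).2.2
      rw [hC2] at this
      rw [← this]
      exact Finset.inter_subset_left
    calc ((interk ℬ 1).filter fun C => f C = X).card ≤ (X.powersetCard 1).card :=
          Finset.card_le_card hsub
      _ = (X.card).choose 1 := Finset.card_powersetCard 1 X
      _ = X.card := Nat.choose_one_right _
      _ = m := hcard X (hWB X hX)
  have hWbig : Nat.factorial m * ((m + 2) - 1) ^ m < W.card := by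
    have := Finset.card_le_mul_card_image (interk ℬ 1) m hfiber
    have h2 : (m + 2) - 1 = m + 1 := by omega
    rw [h2]
    nlinarith [hbig, this]
  -- sunflower with m + 2 petals
  obtain ⟨S, hSW, hScard, E, hE⟩ := sunflower_lemma (m + 2) m W
    (fun A hA => hcard A (hWB A hA)) hWbig
  have hSB : ∀ X ∈ S, X ∈ ℬ := fun X hX => hWB X (hSW hX)
  -- representatives
  have h2 : ∀ X : Finset ℕ, ∃ C, X ∈ W → C ∈ interk ℬ 1 ∧ f C = X := by
    intro X
    by_cases hX : X ∈ W
    · obtain ⟨C, hC, hfC⟩ := Finset.mem_image.1 hX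
      exact ⟨C, fun _ => ⟨hC, hfC⟩⟩
    · exact ⟨∅, fun h => absurd h hX⟩
  choose g hg using h2
  have h3 : ∀ C : Finset ℕ, ∃ x, C ∈ interk ℬ 1 → C = {x} := by
    intro C
    by_cases hC : C ∈ interk ℬ 1
    · obtain ⟨x, hx⟩ := Finset.card_eq_one.1 (mem_interk.1 hC).2
      exact ⟨x, fun _ => hx⟩
    · exact ⟨0, fun h => absurd h hC⟩
  choose pt hpt using h3
  -- the point function on S
  have hSsub2 : (1 : ℕ) < S.card := by omega
  -- key claim : for X ∈ S, pt (g X) ∈ E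
  have hkey : ∀ X ∈ S, pt (g X) ∈ E ∧ X ∩ fB (g X) = {pt (g X)} := by
    intro X hX
    have hXW : X ∈ W := hSW hX
    obtain ⟨hgC, hfg⟩ := hg X hXW
    have hsingle : g X = {pt (g X)} := hpt (g X) hgC
    have hwit := hf (g X) hgC
    have hXB' : X ∩ fB (g X) = {pt (g X)} := by
      nth_rewrite 1 [← hfg]
      rw [hwit.2.2]
      exact hsingle
    refine ⟨?_, hXB'⟩
    set B := fB (g X) with hB
    have hBmem : B ∈ ℬ := hwit.2.1
    have hBcard : B.card = m := hcard B hBmem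
    -- B meets E
    have hBE : (B ∩ E).Nonempty := by
      by_contra hBEe
      rw [Finset.not_nonempty_iff_eq_empty] at hBEe
      -- choose a point of B in each member of S
      have h4 : ∀ Y : Finset ℕ, ∃ b, Y ∈ S → b ∈ B ∩ Y := by
        intro Y
        by_cases hY : Y ∈ S
        · obtain ⟨b, hb⟩ := hint B hBmem Y (hSB Y hY)
          exact ⟨b, fun _ => hb⟩
        · exact ⟨0, fun h => absurd h hY⟩
      choose bf hbf using h4
      have hinj : Set.InjOn bf S := by
        intro Y hY Y' hY' hbb
        by_contra hne
        have hb1 := hbf Y hY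
        have hb2 := hbf Y' hY'
        rw [hbb] at hb1
        have : bf Y' ∈ Y ∩ Y' := Finset.mem_inter.2
          ⟨(Finset.mem_inter.1 hb1).2, (Finset.mem_inter.1 hb2).2⟩
        rw [hE Y hY Y' hY' hne] at this
        have : bf Y' ∈ B ∩ E := Finset.mem_inter.2
          ⟨(Finset.mem_inter.1 hb2).1, this⟩
        rw [hBEe] at this
        exact absurd this (Finset.notMem_empty _)
      have := Finset.card_le_card_of_injOn bf
        (fun Y hY => (Finset.mem_inter.1 (hbf Y hY)).1) hinj
      omega
    obtain ⟨e, he⟩ := hBE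
    rw [Finset.mem_inter] at he
    -- E ⊆ X
    obtain ⟨Y, hY, hYX⟩ := Finset.exists_mem_ne hSsub2 X
    have hEX : E ⊆ X := by
      rw [← hE X hX Y hY (Ne.symm hYX)]
      exact Finset.inter_subset_left
    have : e ∈ X ∩ B := Finset.mem_inter.2 ⟨hEX he.2, he.1⟩
    rw [hXB'] at this
    rw [Finset.mem_singleton] at this
    rw [← this]
    exact he.2
  -- the map X ↦ pt (g X) is injective on S into E
  have hinj2 : Set.InjOn (fun X => pt (g X)) S := by
    intro X hX X' hX' hpp
    have h5 := hg X (hSW hX)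
    have h6 := hg X' (hSW hX')
    have : g X = g X' := by
      rw [hpt (g X) h5.1, hpt (g X') h6.1]
      simpa using hpp
    rw [← h5.2, ← h6.2, this]
  have hcardle := Finset.card_le_card_of_injOn (fun X => pt (g X))
    (fun X hX => (hkey X hX).1) hinj2
  -- but E has at most m elements
  obtain ⟨X₀, hX₀⟩ : S.Nonempty := Finset.card_pos.1 (by omega)
  obtain ⟨Y₀, hY₀, hne₀⟩ := Finset.exists_mem_ne hSsub2 X₀
  have hEX₀ : E ⊆ X₀ := by
    rw [← hE X₀ hX₀ Y₀ hY₀ (Ne.symm hne₀)]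
    exact Finset.inter_subset_left
  have hEcard : E.card ≤ m := by
    calc E.card ≤ X₀.card := Finset.card_le_card hEX₀
      _ = m := hcard X₀ (hSB X₀ hX₀)
  omega

end Lovasz
section AlphaBeta

/-- The bound from Lovász's theorem. -/
def lovaszBd (m : ℕ) : ℕ := m * (Nat.factorial m * (m + 1) ^ m)

lemma betaSet_mem_le (n m : ℕ) :
    ∀ c ∈ {c | ∃ 𝒜 ⊆ ksets n m, IsIntersecting 𝒜 ∧ (interk 𝒜 1).card = c},
      c ≤ lovaszBd m := by
  rintro c ⟨𝒜, hsub, hint, rfl⟩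
  exact lovasz_bound m 𝒜 (fun B hB => (Finset.mem_powersetCard.1 (hsub hB)).2) hint

lemma betaSet_nonempty (n m k : ℕ) :
    {c | ∃ 𝒜 ⊆ ksets n m, IsIntersecting 𝒜 ∧ (interk 𝒜 k).card = c}.Nonempty := by
  refine ⟨(interk ∅ k).card, ∅, Finset.empty_subset _, ?_, rfl⟩
  intro A hA
  exact absurd hA (Finset.notMem_empty _)

lemma beta_le (n m : ℕ) : beta n m 1 ≤ lovaszBd m :=
  csSup_le (betaSet_nonempty n m 1) (betaSet_mem_le n m)

lemma le_beta {n m : ℕ} {𝒜 : Finset (Finset ℕ)} (hsub : 𝒜 ⊆ ksets n m)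
    (hint : IsIntersecting 𝒜) : (interk 𝒜 1).card ≤ beta n m 1 :=
  le_csSup ⟨lovaszBd m, betaSet_mem_le n m⟩ ⟨𝒜, hsub, hint, rfl⟩

lemma card_interk_le_alpha {n m : ℕ} {𝒜 : Finset (Finset ℕ)} (hn : m ≤ n)
    (hsub : 𝒜 ⊆ ksets n m) (hint : IsIntersecting 𝒜) :
    (interk 𝒜 1).card ≤ alpha m := by
  refine (le_beta hsub hint).trans ?_
  exact le_csSup ⟨lovaszBd m, by rintro c ⟨n', _, rfl⟩; exact beta_le n' m⟩ ⟨n, hn, rfl⟩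

end AlphaBeta
section Grow

lemma grd_mono {n n' : ℕ} (h : n ≤ n') : grd n ⊆ grd n' :=
  Finset.Icc_subset_Icc le_rfl h

lemma ksets_mono {n n' k : ℕ} (h : n ≤ n') : ksets n k ⊆ ksets n' k := by
  intro A hA
  rw [ksets, Finset.mem_powersetCard] at hA ⊢
  exact ⟨hA.1.trans (grd_mono h), hA.2⟩

/-- If two members of an intersecting family meet only outside the singleton-intersection
points, the family can be grown (on a larger ground set) to pick up a new
singleton-intersection point inside that intersection. -/
lemma grow (m : ℕ) : ∀ (s n : ℕ) (ℬ : Finset (Finset ℕ)) (B B' : Finset ℕ),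
    ℬ ⊆ ksets n m → IsIntersecting ℬ → B ∈ ℬ → B' ∈ ℬ →
    (B ∩ B').card = s → (∀ x ∈ B ∩ B', x ∉ interPts ℬ) →
    ∃ n' ℬ', n ≤ n' ∧ ℬ ⊆ ℬ' ∧ ℬ' ⊆ ksets n' m ∧ IsIntersecting ℬ' ∧
      ∃ p ∈ B ∩ B', p ∈ interPts ℬ' := by
  intro s
  induction s using Nat.strong_induction_on with
  | _ s ih =>
  intro n ℬ B B' hsub hint hB hB' hcards hdisj
  have hne : (B ∩ B').Nonempty := hint B hB B' hB'
  by_cases hs1 : s ≤ 1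
  · -- the intersection is a singleton, already a singleton-intersection point
    have hcard1 : (B ∩ B').card = 1 := by
      have := Finset.card_pos.2 hne
      omega
    obtain ⟨p, hp⟩ := Finset.card_eq_one.1 hcard1
    have hpmem : p ∈ B ∩ B' := by rw [hp]; exact Finset.mem_singleton_self p
    have : p ∈ interPts ℬ := mem_interPts.2 ⟨B, hB, B', hB', hp⟩
    exact absurd this (hdisj p hpmem)
  · push_neg at hs1
    have hs2 : 1 < (B ∩ B').card := by omega
    obtain ⟨p, hp, q, hq, hpq⟩ := Finset.one_lt_card.1 hs2
    have hqB : q ∈ B := (Finset.mem_inter.1 hq).1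
    have hBgrd : B ⊆ grd n := (Finset.mem_powersetCard.1 (hsub hB)).1
    have hB'grd : B' ⊆ grd n := (Finset.mem_powersetCard.1 (hsub hB')).1
    have hBcard : B.card = m := (Finset.mem_powersetCard.1 (hsub hB)).2
    have htgrd : (n + 1 : ℕ) ∉ grd n := by simp [grd]
    have htB : (n + 1 : ℕ) ∉ B := fun h => htgrd (hBgrd h)
    have htB' : (n + 1 : ℕ) ∉ B' := fun h => htgrd (hB'grd h)
    set D := insert (n + 1) (B.erase q) with hD
    have htD : (n + 1 : ℕ) ∉ B.erase q := fun h => htB (Finset.mem_of_mem_erase h)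
    have hDcard : D.card = m := by
      rw [hD, Finset.card_insert_of_notMem htD, Finset.card_erase_of_mem hqB, hBcard]
      have : 0 < m := by rw [← hBcard]; exact Finset.card_pos.2 ⟨q, hqB⟩
      omega
    have hDgrd : D ⊆ grd (n + 1) := by
      rw [hD]
      refine Finset.insert_subset ?_ ?_
      · simp [grd]
      · exact ((Finset.erase_subset q B).trans hBgrd).trans (grd_mono (Nat.le_succ n))
    set ℬ₁ := insert D ℬ with hℬ₁
    have hsub1 : ℬ₁ ⊆ ksets (n + 1) m := by
      rw [hℬ₁]
      refine Finset.insert_subset (Finset.mem_powersetCard.2 ⟨hDgrd, hDcard⟩) ?_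
      exact fun X hX => ksets_mono (Nat.le_succ n) (hsub hX)
    have hmeets : ∀ C ∈ ℬ, (D ∩ C).Nonempty := by
      intro C hC
      have hBC : (B ∩ C).Nonempty := hint B hB C hC
      have hnq : ¬ (B ∩ C ⊆ {q}) := by
        intro hsubq
        have : B ∩ C = {q} := by
          apply Finset.eq_of_subset_of_card_le hsubq
          simp [Finset.card_pos.2 hBC, Nat.one_le_iff_ne_zero,
            Finset.card_ne_zero_of_mem hBC.choose_spec]
        have : q ∈ interPts ℬ := mem_interPts.2 ⟨B, hB, C, hC, this⟩
        exact hdisj q hq this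
      obtain ⟨z, hz, hzq⟩ := Finset.not_subset.1 hnq
      rw [Finset.mem_singleton] at hzq
      refine ⟨z, Finset.mem_inter.2 ⟨?_, (Finset.mem_inter.1 hz).2⟩⟩
      rw [hD]
      exact Finset.mem_insert_of_mem (Finset.mem_erase.2 ⟨hzq, (Finset.mem_inter.1 hz).1⟩)
    have hint1 : IsIntersecting ℬ₁ := by
      intro X hX Y hY
      rw [hℬ₁, Finset.mem_insert] at hX hY
      rcases hX with rfl | hX
      · rcases hY with rfl | hY
        · exact ⟨n + 1, Finset.mem_inter.2 ⟨Finset.mem_insert_self _ _,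
            Finset.mem_insert_self _ _⟩⟩
        · exact hmeets Y hY
      · rcases hY with rfl | hY
        · rw [Finset.inter_comm]; exact hmeets X hX
        · exact hint X hX Y hY
    by_cases hnewpt : ∃ x ∈ B ∩ B', x ∈ interPts ℬ₁
    · obtain ⟨x, hx, hxin⟩ := hnewpt
      exact ⟨n + 1, ℬ₁, Nat.le_succ n, Finset.subset_insert D ℬ, hsub1, hint1, x, hx, hxin⟩
    · push_neg at hnewpt
      have hDB' : D ∩ B' = (B ∩ B').erase q := by
        ext z
        simp only [hD, Finset.mem_inter, Finset.mem_insert, Finset.mem_erase]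
        constructor
        · rintro ⟨rfl | ⟨hzq, hzB⟩, hzB'⟩
          · exact absurd hzB' htB'
          · exact ⟨hzq, hzB, hzB'⟩
        · rintro ⟨hzq, hzB, hzB'⟩
          exact ⟨Or.inr ⟨hzq, hzB⟩, hzB'⟩
      have hcard1 : (D ∩ B').card = s - 1 := by
        rw [hDB', Finset.card_erase_of_mem hq, hcards]
      have hdisj1 : ∀ x ∈ D ∩ B', x ∉ interPts ℬ₁ := by
        intro x hx
        rw [hDB'] at hx
        exact hnewpt x (Finset.mem_of_mem_erase hx)
      obtain ⟨n'', ℬ'', hle'', hBB'', hks'', hint'', p', hp', hpin'⟩ :=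
        ih (s - 1) (by omega) (n + 1) ℬ₁ D B' hsub1 hint1 (Finset.mem_insert_self _ _)
          (Finset.mem_insert_of_mem hB') hcard1 hdisj1
      refine ⟨n'', ℬ'', by omega, (Finset.subset_insert D ℬ).trans hBB'', hks'', hint'', p', ?_, hpin'⟩
      rw [hDB'] at hp'
      exact Finset.mem_of_mem_erase hp'

/-- Since `ℬ` realises the maximum `alpha m` of singleton intersections, every pairwise
intersection of members of `ℬ` must meet `[alpha m]`. -/
lemma key_meet {n m : ℕ} {ℬ : Finset (Finset ℕ)} (hn : m ≤ n) (hsub : ℬ ⊆ ksets n m)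
    (hint : IsIntersecting ℬ) (hpts : interPts ℬ = Finset.Icc 1 (alpha m)) :
    ∀ B ∈ ℬ, ∀ B' ∈ ℬ, ((B ∩ B') ∩ Finset.Icc 1 (alpha m)).Nonempty := by
  intro B hB B' hB'
  by_contra h
  rw [Finset.not_nonempty_iff_eq_empty] at h
  have hdisj : ∀ x ∈ B ∩ B', x ∉ interPts ℬ := by
    intro x hx hmem
    rw [hpts] at hmem
    have : x ∈ (B ∩ B') ∩ Finset.Icc 1 (alpha m) := Finset.mem_inter.2 ⟨hx, hmem⟩
    rw [h] at this
    exact absurd this (Finset.notMem_empty _)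
  obtain ⟨n', ℬ', hle, hBB', hks, hint', p, hp, hpin⟩ :=
    grow m _ n ℬ B B' hsub hint hB hB' rfl hdisj
  have hpnot : p ∉ Finset.Icc 1 (alpha m) := by
    intro hmem
    have : p ∈ (B ∩ B') ∩ Finset.Icc 1 (alpha m) := Finset.mem_inter.2 ⟨hp, hmem⟩
    rw [h] at this
    exact absurd this (Finset.notMem_empty _)
  have h1 : (insert p (Finset.Icc 1 (alpha m))).card ≤ (interPts ℬ').card := by
    refine Finset.card_le_card (Finset.insert_subset hpin ?_)
    rw [← hpts]
    exact interPts_mono hBB'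
  rw [Finset.card_insert_of_notMem hpnot, Nat.card_Icc] at h1
  have h2 := card_interPts_le ℬ'
  have h3 := card_interk_le_alpha (le_trans hn hle) hks hint'
  omega

end Grow
theorem stmt_1 (k r : ℕ) (hk : 1 ≤ k) (hkr : k ≤ r) :
    ∃ n₀ : ℕ, ∀ n, n₀ ≤ n → ∀ ℬ ⊆ ksets n (r - k + 1),
      IsIntersecting ℬ →
      interPts ℬ = Finset.Icc 1 (alpha (r - k + 1)) →
      IsIntersecting ((ksets n r).filter fun A => ∃ B ∈ ℬ, B ⊆ A) ∧
      interk ((ksets n r).filter fun A => ∃ B ∈ ℬ, B ⊆ A) k =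
        (ksets n k).filter fun C => (C ∩ Finset.Icc 1 (alpha (r - k + 1))).Nonempty := by
  classical
  set m := r - k + 1 with hm
  have hmk : m + k = r + 1 := by omega
  have hmr : m ≤ r := by omega
  refine ⟨6 * r + 8, ?_⟩
  intro n hn ℬ hsub hint hpts
  have hmn : m ≤ n := by omega
  set 𝒜 := (ksets n r).filter fun A => ∃ B ∈ ℬ, B ⊆ A with h𝒜
  have hAint : IsIntersecting 𝒜 := by
    intro A hA A' hA'
    rw [h𝒜, Finset.mem_filter] at hA hA'
    obtain ⟨hAk, B, hB, hBA⟩ := hA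
    obtain ⟨hA'k, B', hB', hB'A⟩ := hA'
    obtain ⟨x, hx⟩ := hint B hB B' hB'
    rw [Finset.mem_inter] at hx
    exact ⟨x, Finset.mem_inter.2 ⟨hBA hx.1, hB'A hx.2⟩⟩
  refine ⟨hAint, ?_⟩
  apply Finset.Subset.antisymm
  · -- every k-intersection meets [alpha m]
    intro C hC
    obtain ⟨⟨A, hA, A', hA', hAA'⟩, hCcard⟩ := mem_interk.1 hC
    rw [h𝒜, Finset.mem_filter] at hA hA'
    obtain ⟨hAk, B, hB, hBA⟩ := hA
    obtain ⟨hA'k, B', hB', hB'A⟩ := hA'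
    rw [Finset.mem_filter]
    constructor
    · refine Finset.mem_powersetCard.2 ⟨?_, hCcard⟩
      rw [← hAA']
      exact Finset.inter_subset_left.trans (Finset.mem_powersetCard.1 hAk).1
    · obtain ⟨x, hx⟩ := key_meet hmn hsub hint hpts B hB B' hB'
      rw [Finset.mem_inter] at hx
      refine ⟨x, Finset.mem_inter.2 ⟨?_, hx.2⟩⟩
      rw [← hAA']
      have hxBB' := Finset.mem_inter.1 hx.1
      exact Finset.mem_inter.2 ⟨hBA hxBB'.1, hB'A hxBB'.2⟩
  · -- every k-set meeting [alpha m] is a k-intersection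
    intro C hC
    rw [Finset.mem_filter] at hC
    obtain ⟨hCk, x, hxmem⟩ := hC
    rw [Finset.mem_inter] at hxmem
    obtain ⟨hxC, hxIcc⟩ := hxmem
    have hxpts : x ∈ interPts ℬ := by rw [hpts]; exact hxIcc
    obtain ⟨B, hB, B', hB', hBB'⟩ := mem_interPts.1 hxpts
    have hCgrd : C ⊆ grd n := (Finset.mem_powersetCard.1 hCk).1
    have hCcard : C.card = k := (Finset.mem_powersetCard.1 hCk).2
    have hBgrd : B ⊆ grd n := (Finset.mem_powersetCard.1 (hsub hB)).1
    have hBcard : B.card = m := (Finset.mem_powersetCard.1 (hsub hB)).2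
    have hB'grd : B' ⊆ grd n := (Finset.mem_powersetCard.1 (hsub hB')).1
    have hB'card : B'.card = m := (Finset.mem_powersetCard.1 (hsub hB')).2
    have hxBB' : x ∈ B ∩ B' := by rw [hBB']; exact Finset.mem_singleton_self x
    rw [Finset.mem_inter] at hxBB'
    -- the pool of fresh points
    set pool := grd n \ (B ∪ B' ∪ C) with hpool
    have hBBC : B ∪ B' ∪ C ⊆ grd n :=
      Finset.union_subset (Finset.union_subset hBgrd hB'grd) hCgrd
    have hgrdcard : (grd n).card = n := by simp [grd]
    have hBBCcard : (B ∪ B' ∪ C).card ≤ 3 * r := by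
      calc (B ∪ B' ∪ C).card ≤ (B ∪ B').card + C.card := Finset.card_union_le _ _
        _ ≤ B.card + B'.card + C.card := by
            have := Finset.card_union_le B B'
            omega
        _ ≤ 3 * r := by omega
    have hpoolcard : 3 * r + 5 ≤ pool.card := by
      rw [hpool, Finset.card_sdiff_of_subset hBBC, hgrdcard]
      omega
    -- cardinalities of B ∪ C and B' ∪ C
    have hBC : (B ∪ C).card + (B ∩ C).card = m + k := by
      rw [Finset.card_union_add_card_inter, hBcard, hCcard]
    have hBCx : 1 ≤ (B ∩ C).card :=
      Finset.card_pos.2 ⟨x, Finset.mem_inter.2 ⟨hxBB'.1, hxC⟩⟩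
    have hBCle : (B ∪ C).card ≤ r := by omega
    have hB'C : (B' ∪ C).card + (B' ∩ C).card = m + k := by
      rw [Finset.card_union_add_card_inter, hB'card, hCcard]
    have hB'Cx : 1 ≤ (B' ∩ C).card :=
      Finset.card_pos.2 ⟨x, Finset.mem_inter.2 ⟨hxBB'.2, hxC⟩⟩
    have hB'Cle : (B' ∪ C).card ≤ r := by omega
    -- choose the padding sets
    obtain ⟨P, hPpool, hPcard⟩ := Finset.exists_subset_card_eq
      (show r - (B ∪ C).card ≤ pool.card by omega)
    have hPPC : r - (B' ∪ C).card ≤ (pool \ P).card := by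
      rw [Finset.card_sdiff_of_subset hPpool]
      omega
    obtain ⟨P', hP'sub, hP'card⟩ := Finset.exists_subset_card_eq hPPC
    have hP'pool : P' ⊆ pool := hP'sub.trans (Finset.sdiff_subset)
    have hpoolBBC : ∀ z ∈ pool, z ∉ B ∪ B' ∪ C := by
      intro z hz
      rw [hpool, Finset.mem_sdiff] at hz
      exact hz.2
    set A := (B ∪ C) ∪ P with hA
    set A' := (B' ∪ C) ∪ P' with hA'
    have hdisj1 : Disjoint (B ∪ C) P := by
      rw [Finset.disjoint_right]
      intro z hzP hzBC
      refine hpoolBBC z (hPpool hzP) ?_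
      rcases Finset.mem_union.1 hzBC with h | h
      · exact Finset.mem_union_left _ (Finset.mem_union_left _ h)
      · exact Finset.mem_union_right _ h
    have hdisj2 : Disjoint (B' ∪ C) P' := by
      rw [Finset.disjoint_right]
      intro z hzP hzBC
      refine hpoolBBC z (hP'pool hzP) ?_
      rcases Finset.mem_union.1 hzBC with h | h
      · exact Finset.mem_union_left _ (Finset.mem_union_right _ h)
      · exact Finset.mem_union_right _ h
    have hAcard : A.card = r := by
      rw [hA, Finset.card_union_of_disjoint hdisj1, hPcard]
      omega
    have hA'card : A'.card = r := by
      rw [hA', Finset.card_union_of_disjoint hdisj2, hP'card]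
      omega
    have hAgrd : A ⊆ grd n := by
      rw [hA]
      exact Finset.union_subset (Finset.union_subset hBgrd hCgrd)
        (hPpool.trans (Finset.sdiff_subset))
    have hA'grd : A' ⊆ grd n := by
      rw [hA']
      exact Finset.union_subset (Finset.union_subset hB'grd hCgrd)
        (hP'pool.trans (Finset.sdiff_subset))
    have hA𝒜 : A ∈ 𝒜 := by
      rw [h𝒜, Finset.mem_filter]
      exact ⟨Finset.mem_powersetCard.2 ⟨hAgrd, hAcard⟩,
        B, hB, (Finset.subset_union_left).trans (Finset.subset_union_left)⟩
    have hA'𝒜 : A' ∈ 𝒜 := by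
      rw [h𝒜, Finset.mem_filter]
      exact ⟨Finset.mem_powersetCard.2 ⟨hA'grd, hA'card⟩,
        B', hB', (Finset.subset_union_left).trans (Finset.subset_union_left)⟩
    have hinter : A ∩ A' = C := by
      ext z
      rw [Finset.mem_inter]
      constructor
      · rintro ⟨hzA, hzA'⟩
        rw [hA, Finset.mem_union, Finset.mem_union] at hzA
        rw [hA', Finset.mem_union, Finset.mem_union] at hzA'
        rcases hzA with (hzB | hzC) | hzP
        · rcases hzA' with (hzB' | hzC) | hzP'
          · have : z ∈ B ∩ B' := Finset.mem_inter.2 ⟨hzB, hzB'⟩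
            rw [hBB', Finset.mem_singleton] at this
            rw [this]; exact hxC
          · exact hzC
          · exact absurd (Finset.mem_union_left _ (Finset.mem_union_left _ hzB))
              (hpoolBBC z (hP'pool hzP'))
        · exact hzC
        · rcases hzA' with (hzB' | hzC) | hzP'
          · exact absurd (Finset.mem_union_left _ (Finset.mem_union_right _ hzB'))
              (hpoolBBC z (hPpool hzP))
          · exact hzC
          · have := hP'sub hzP'
            rw [Finset.mem_sdiff] at this
            exact absurd hzP this.2
      · intro hzC
        constructor
        · rw [hA]
          exact Finset.mem_union_left _ (Finset.mem_union_right _ hzC)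
        · rw [hA']
          exact Finset.mem_union_left _ (Finset.mem_union_right _ hzC)
    exact mem_interk.2 ⟨⟨A, hA𝒜, A', hA'𝒜, hinter⟩, hCcard⟩
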